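/- Under the same assumptions as the energy-dependent uncertainty principle for local altered Hamiltonians, for ANY fixed tuple φ' = (φ'_1,…,φ'_m) of Hermitian positive semidefinite matrices with φ'_i ⪯ Π_i for each i (in particular, any tuple of states in the ranges of the Π_i), one has Σ_{s∈S} w_s · Var_ψ(H_{φ(s)}) ≥ (1/2) · (min_{1≤i≤m} (d_i − 1)/(d_i(d_i + 1))) · Tr(H_{φ'} ψ), where H_{φ'} := Σ_{i=1}^m (Π_i + φ'_i). -/

import Mathlib

open Matrix Kronecker
open scoped ComplexOrder

/-- The variance `Var_ψ(G) = Tr(G²ψ) − (Tr(Gψ))²` of a (Hermitian) observable `G`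
in the (density-matrix) state `ψ`, as a real number. -/
noncomputable def matVar {N : ℕ} (ψ G : Matrix (Fin N) (Fin N) ℂ) : ℝ :=
  ((G * G * ψ).trace).re - (((G * ψ).trace).re) ^ 2

/-- The swap matrix `S_N` on `ℂ^N ⊗ ℂ^N`. -/
noncomputable def swapMat (N : ℕ) : Matrix (Fin N × Fin N) (Fin N × Fin N) ℂ :=
  Matrix.of fun p q => if p.1 = q.2 ∧ p.2 = q.1 then 1 else 0

namespace UAux

variable {N : ℕ}

lemma trace_herm_mul_real {A B : Matrix (Fin N) (Fin N) ℂ}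
    (hA : A.IsHermitian) (hB : B.IsHermitian) :
    (A * B).trace = (((A * B).trace.re : ℝ) : ℂ) := by
  have h : (starRingEnd ℂ) ((A * B).trace) = (A * B).trace := by
    have h2 := Matrix.trace_conjTranspose (A * B)
    rw [conjTranspose_mul, hA.eq, hB.eq, trace_mul_comm] at h2
    exact h2.symm
  exact (Complex.conj_eq_iff_re.mp h).symm

lemma psd_diag_nonneg {M : Matrix (Fin N) (Fin N) ℂ} (hM : M.PosSemidef) (i : Fin N) :
    0 ≤ M i i := by
  have := hM.dotProduct_mulVec_nonneg (Pi.single i 1)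
  simpa [Matrix.mulVec_single, single_dotProduct, dotProduct,
    Pi.single_apply] using this

lemma psd_trace_nonneg {M : Matrix (Fin N) (Fin N) ℂ} (hM : M.PosSemidef) :
    0 ≤ (M.trace).re := by
  have : (0:ℂ) ≤ M.trace := Finset.sum_nonneg fun i _ => psd_diag_nonneg hM i
  exact (Complex.le_def.mp this).1

lemma trace_mul_psd_nonneg {A B : Matrix (Fin N) (Fin N) ℂ}
    (hA : A.PosSemidef) (hB : B.PosSemidef) :
    0 ≤ ((A * B).trace).re := by
  open scoped MatrixOrder in
  have h1 : (A * B).trace = (CFC.sqrt B * A * CFC.sqrt B).trace := by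
    conv_lhs => rw [← CFC.sqrt_mul_sqrt_self B hB.nonneg, ← mul_assoc, trace_mul_comm, ← mul_assoc]
  open scoped MatrixOrder in
  have h2 : (CFC.sqrt B * A * CFC.sqrt B).PosSemidef := by
    have := hA.mul_mul_conjTranspose_same (CFC.sqrt B)
    rwa [(CFC.sqrt_nonneg B).posSemidef.1.eq] at this
  rw [h1]; exact psd_trace_nonneg h2

lemma var_nonneg {G ψ : Matrix (Fin N) (Fin N) ℂ} (hG : G.IsHermitian)
    (hψ : ψ.PosSemidef) (hψtr : ψ.trace = 1) :
    0 ≤ ((G * G * ψ).trace).re - (((G * ψ).trace).re) ^ 2 := by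
  set t : ℝ := ((G * ψ).trace).re with ht
  have htr : (G * ψ).trace = ((t : ℝ) : ℂ) := trace_herm_mul_real hG hψ.1
  set Gt : Matrix (Fin N) (Fin N) ℂ := G - (t : ℂ) • 1 with hGt
  have hGtH : Gt.IsHermitian := by
    rw [Matrix.IsHermitian, hGt, Matrix.conjTranspose_sub, hG.eq, Matrix.conjTranspose_smul]
    congr 1
    simp [Complex.star_def, Complex.conj_ofReal]
  have hpsd : (Gt * Gt).PosSemidef := by
    have := Matrix.posSemidef_conjTranspose_mul_self Gt
    rwa [hGtH.eq] at this
  have h0 : 0 ≤ ((Gt * Gt * ψ).trace).re := trace_mul_psd_nonneg hpsd hψ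
  have hexp : Gt * Gt * ψ = G * G * ψ - (t:ℂ) • (G * ψ) - (t:ℂ) • (G * ψ)
      + ((t:ℂ) * (t:ℂ)) • ψ := by
    rw [hGt]
    simp only [Matrix.sub_mul, Matrix.mul_sub, Matrix.smul_mul, Matrix.mul_smul,
      smul_smul, Matrix.mul_one, Matrix.one_mul]
    module
  rw [hexp] at h0
  simp only [Matrix.trace_add, Matrix.trace_sub, Matrix.trace_smul, htr, hψtr,
    smul_eq_mul, mul_one, Complex.sub_re, Complex.add_re, Complex.mul_re,
    Complex.ofReal_re, Complex.ofReal_im] at h0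
  nlinarith [h0]

lemma trace_expand_prod (X Y Z W ψ : Matrix (Fin N) (Fin N) ℂ) :
    ((X + Y) * (Z + W) * ψ).trace
      = (X * Z * ψ).trace + (X * W * ψ).trace + (Y * Z * ψ).trace + (Y * W * ψ).trace := by
  have h : (X + Y) * (Z + W) * ψ = X * Z * ψ + X * W * ψ + Y * Z * ψ + Y * W * ψ := by
    noncomm_ring
  rw [h, Matrix.trace_add, Matrix.trace_add, Matrix.trace_add]

lemma quad_form_two {M : Matrix (Fin N) (Fin N) ℂ} (a b : ℂ) (i j : Fin N) :
    star (a • (Pi.single i 1 : Fin N → ℂ) + b • (Pi.single j 1 : Fin N → ℂ)) ⬝ᵥ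
      (M *ᵥ (a • (Pi.single i 1 : Fin N → ℂ) + b • (Pi.single j 1 : Fin N → ℂ))) =
    (starRingEnd ℂ) a * a * M i i + (starRingEnd ℂ) a * b * M i j
      + (starRingEnd ℂ) b * a * M j i + (starRingEnd ℂ) b * b * M j j := by
  rw [star_add, star_smul, star_smul, Matrix.mulVec_add, Matrix.mulVec_smul,
    Matrix.mulVec_smul, add_dotProduct, smul_dotProduct,
    smul_dotProduct, dotProduct_add, dotProduct_add,
    dotProduct_smul, dotProduct_smul, dotProduct_smul,
    dotProduct_smul]
  have h1 : ∀ k l : Fin N, (Pi.single k 1 : Fin N → ℂ) ⬝ᵥ (M *ᵥ (Pi.single l 1 : Fin N → ℂ))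
      = M k l := by
    intro k l
    rw [Matrix.mulVec_single, single_dotProduct]
    simp
  have hs : ∀ k : Fin N, star (Pi.single k 1 : Fin N → ℂ) = Pi.single k 1 := by
    intro k; ext l; simp [Pi.single_apply, apply_ite]
  rw [hs, hs, h1, h1, h1, h1]
  simp [smul_eq_mul]
  ring

lemma psd_entry_sq_le {M : Matrix (Fin N) (Fin N) ℂ} (hM : M.PosSemidef) (i j : Fin N) :
    Complex.normSq (M i j) ≤ (M i i).re * (M j j).re := by
  by_cases hij : i = j
  · subst hij
    have h0 : 0 ≤ M i i := psd_diag_nonneg hM i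
    have him : (M i i).im = 0 := (Complex.le_def.mp h0).2.symm
    simp [Complex.normSq_apply, him]
  · have hji : M j i = (starRingEnd ℂ) (M i j) := by
      have := congrFun (congrFun hM.1.eq j) i
      simpa [Matrix.conjTranspose_apply] using this.symm
    set u := M i j with hu
    have key : ∀ t : ℝ, 0 ≤ (Complex.normSq u * (M i i).re) * (t * t)
        + (2 * Complex.normSq u) * t + (M j j).re := by
      intro t
      have h := hM.dotProduct_mulVec_nonneg ((((t : ℂ) * u) • (Pi.single i 1 : Fin N → ℂ))
        + ((1:ℂ) • (Pi.single j 1 : Fin N → ℂ)))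
      rw [quad_form_two ((t : ℂ) * u) 1 i j] at h
      have hre := (Complex.le_def.mp h).1
      have heq : ((starRingEnd ℂ) ((t:ℂ) * u) * ((t:ℂ) * u) * M i i
          + (starRingEnd ℂ) ((t:ℂ)*u) * 1 * M i j + (starRingEnd ℂ) 1 * ((t:ℂ)*u) * M j i
          + (starRingEnd ℂ) 1 * 1 * M j j).re
          = (Complex.normSq u * (M i i).re) * (t * t)
            + (2 * Complex.normSq u) * t + (M j j).re := by
        rw [hji]
        simp [Complex.normSq_apply, Complex.mul_re, Complex.mul_im, Complex.add_re]
        ring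
      rw [heq] at hre
      exact hre
    have hd := discrim_le_zero key
    rw [discrim] at hd
    by_cases hu0 : Complex.normSq u = 0
    · rw [hu0]
      exact mul_nonneg ((Complex.le_def.mp (psd_diag_nonneg hM i)).1)
        ((Complex.le_def.mp (psd_diag_nonneg hM j)).1)
    · have hpos : 0 < Complex.normSq u := lt_of_le_of_ne (Complex.normSq_nonneg u) (Ne.symm hu0)
      nlinarith [hd]

lemma psd_trace_sq_le {M : Matrix (Fin N) (Fin N) ℂ} (hM : M.PosSemidef) :
    ((M * M).trace).re ≤ ((M.trace).re) ^ 2 := by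
  have h1 : ((M * M).trace).re = ∑ i, ∑ j, Complex.normSq (M i j) := by
    have : (M * M).trace = ∑ i, ∑ j, M i j * M j i := by
      simp [Matrix.trace, Matrix.diag, Matrix.mul_apply]
    rw [this]
    rw [Complex.re_sum]
    refine Finset.sum_congr rfl fun i _ => ?_
    rw [Complex.re_sum]
    refine Finset.sum_congr rfl fun j _ => ?_
    have hji : M j i = (starRingEnd ℂ) (M i j) := by
      have := congrFun (congrFun hM.1.eq j) i
      simpa [Matrix.conjTranspose_apply] using this.symm
    rw [hji, Complex.mul_conj]
    simp
  have h2 : ((M.trace).re) ^ 2 = ∑ i, ∑ j, ((M i i).re * (M j j).re) := by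
    have : (M.trace).re = ∑ i, (M i i).re := by
      simp [Matrix.trace, Matrix.diag, Complex.re_sum]
    rw [this, pow_two, Finset.sum_mul_sum]
  rw [h1, h2]
  exact Finset.sum_le_sum fun i _ => Finset.sum_le_sum fun j _ => psd_entry_sq_le hM i j

lemma swap_mul_kron (A B : Matrix (Fin N) (Fin N) ℂ) :
    swapMat N * (A ⊗ₖ B) = (B ⊗ₖ A) * swapMat N := by
  ext ⟨k, l⟩ ⟨p, q⟩
  simp only [Matrix.mul_apply, swapMat, Matrix.of_apply, Fintype.sum_prod_type,
    Matrix.kroneckerMap_apply, ite_and]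
  rw [Finset.sum_comm]
  simp [Finset.sum_ite_eq, Finset.sum_ite_eq', mul_comm]

lemma trace_swap_kron (A B : Matrix (Fin N) (Fin N) ℂ) :
    (swapMat N * (A ⊗ₖ B)).trace = (A * B).trace := by
  simp only [Matrix.trace, Matrix.diag, Matrix.mul_apply, swapMat, Matrix.of_apply,
    Fintype.sum_prod_type, Matrix.kroneckerMap_apply, ite_and]
  rw [Finset.sum_comm]
  simp [Finset.sum_ite_eq, Finset.sum_ite_eq']

lemma trace_mul_mul_eq (A B C : Matrix (Fin N) (Fin N) ℂ) :
    (A * B * C).trace = ((A ⊗ₖ B) * (swapMat N * (C ⊗ₖ 1))).trace := by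
  rw [swap_mul_kron C 1, ← mul_assoc, ← Matrix.mul_kronecker_mul]
  rw [Matrix.trace_mul_comm ((A * 1) ⊗ₖ (B * C)) (swapMat N), trace_swap_kron,
    Matrix.mul_one, Matrix.mul_assoc]

end UAux

set_option maxHeartbeats 2000000

/-- Under the assumptions of the energy-dependent uncertainty principle, for an
arbitrary fixed tuple `φ'` of positive semidefinite matrices with `φ'_i ⪯ Π_i`,
the expected variance of the altered Hamiltonians is at least
`(1/2) · min_i ((d_i−1)/(d_i(d_i+1))) · Tr(H_{φ'} ψ)` with `H_{φ'} = Σ_i (Π_i + φ'_i)`. -/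
theorem expected_variance_lower_bound_arbitrary_altered
    {N m : ℕ} (hN : 1 ≤ N) (hm : 0 < m)
    (Pr : Fin m → Matrix (Fin N) (Fin N) ℂ)
    (hPrHerm : ∀ i, (Pr i).IsHermitian)
    (hPrIdem : ∀ i, Pr i * Pr i = Pr i)
    (d : Fin m → ℝ) (hd : ∀ i, d i = ((Pr i).trace).re) (hd1 : ∀ i, 1 ≤ d i)
    (ψ : Matrix (Fin N) (Fin N) ℂ) (hψ : ψ.PosSemidef) (hψtr : ψ.trace = 1)
    (S : Type) [Fintype S] (w : S → ℝ)
    (hw0 : ∀ s, 0 ≤ w s) (hw1 : ∀ s, w s ≤ 1) (hwsum : ∑ s, w s = 1)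
    (φ : S → Fin m → Matrix (Fin N) (Fin N) ℂ)
    (hφHerm : ∀ s i, (φ s i).IsHermitian)
    (hφIdem : ∀ s i, φ s i * φ s i = φ s i)
    (hφtr : ∀ s i, (φ s i).trace = 1)
    (hφrange : ∀ s i, Pr i * φ s i = φ s i ∧ φ s i * Pr i = φ s i)
    (hfirst : ∀ i, ∑ s, (w s : ℂ) • φ s i = ((d i : ℂ))⁻¹ • Pr i)
    (hsecond : ∀ i, ∑ s, (w s : ℂ) • (φ s i ⊗ₖ φ s i) =
      ((d i : ℂ) * ((d i : ℂ) + 1))⁻¹ •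
        ((Pr i ⊗ₖ Pr i) * (1 + swapMat N) * (Pr i ⊗ₖ Pr i)))
    (hpair : ∀ i j, i ≠ j → ∑ s, (w s : ℂ) • (φ s i ⊗ₖ φ s j) =
      (((d i : ℂ))⁻¹ • Pr i) ⊗ₖ (((d j : ℂ))⁻¹ • Pr j))
    (φ' : Fin m → Matrix (Fin N) (Fin N) ℂ)
    (hφ'psd : ∀ i, (φ' i).PosSemidef)
    (hφ'le : ∀ i, (Pr i - φ' i).PosSemidef) :
    ∑ s, w s * matVar ψ (∑ i, (Pr i + φ s i)) ≥
      (1 / 2) * (⨅ i : Fin m, (d i - 1) / (d i * (d i + 1))) *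
        (((∑ i, (Pr i + φ' i)) * ψ).trace).re := by
  classical
  have hnem : Nonempty (Fin m) := ⟨⟨0, hm⟩⟩
  set c : ℝ := ⨅ i : Fin m, (d i - 1) / (d i * (d i + 1)) with hc
  set α : Fin m → ℝ := fun i => ((Pr i * ψ).trace).re with hα
  set β : Fin m → ℝ := fun i => ((Pr i * ψ * Pr i * ψ).trace).re with hβ
  set γ : Fin m → ℝ := fun i => ((φ' i * ψ).trace).re with hγ
  have hPrPSD : ∀ i, (Pr i).PosSemidef := by
    intro i
    have := Matrix.posSemidef_conjTranspose_mul_self (Pr i)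
    rwa [(hPrHerm i).eq, hPrIdem i] at this
  have hdpos : ∀ i, 0 < d i := fun i => lt_of_lt_of_le one_pos (hd1 i)
  have haR : ∀ i, (Pr i * ψ).trace = ((α i : ℝ) : ℂ) := by
    intro i; simp only [hα]
    exact UAux.trace_herm_mul_real (hPrHerm i) hψ.1
  have hMplain : ∀ i, (Pr i * ψ * Pr i).PosSemidef := by
    intro i
    have := hψ.mul_mul_conjTranspose_same (Pr i)
    rwa [(hPrHerm i).eq] at this
  have hbR : ∀ i, (Pr i * ψ * Pr i * ψ).trace = ((β i : ℝ) : ℂ) := by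
    intro i; simp only [hβ]
    exact UAux.trace_herm_mul_real (hMplain i).1 hψ.1
  have hα0 : ∀ i, 0 ≤ α i := by
    intro i; simp only [hα]
    exact UAux.trace_mul_psd_nonneg (hPrPSD i) hψ
  have hα1 : ∀ i, α i ≤ 1 := by
    intro i
    have h1 : ((1 : Matrix (Fin N) (Fin N) ℂ) - Pr i).PosSemidef := by
      have hh : ((1 : Matrix (Fin N) (Fin N) ℂ) - Pr i) * (1 - Pr i) = 1 - Pr i := by
        simp only [Matrix.sub_mul, Matrix.mul_sub, Matrix.one_mul, Matrix.mul_one, hPrIdem i]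
        abel
      have hherm : ((1 : Matrix (Fin N) (Fin N) ℂ) - Pr i).IsHermitian := by
        rw [Matrix.IsHermitian, Matrix.conjTranspose_sub, Matrix.conjTranspose_one,
          (hPrHerm i).eq]
      have := Matrix.posSemidef_conjTranspose_mul_self ((1 : Matrix (Fin N) (Fin N) ℂ) - Pr i)
      rwa [hherm.eq, hh] at this
    have h2 := UAux.trace_mul_psd_nonneg h1 hψ
    rw [Matrix.sub_mul, Matrix.trace_sub, Matrix.one_mul, hψtr] at h2
    simp only [Complex.sub_re, Complex.one_re] at h2
    simp only [hα]
    linarith [h2]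
  have hβα : ∀ i, β i ≤ (α i) ^ 2 := by
    intro i
    have h1 := UAux.psd_trace_sq_le (hMplain i)
    have hMM : (Pr i * ψ * Pr i) * (Pr i * ψ * Pr i) = (Pr i * ψ * Pr i * ψ) * Pr i := by
      calc (Pr i * ψ * Pr i) * (Pr i * ψ * Pr i)
          = Pr i * (ψ * ((Pr i * Pr i) * (ψ * Pr i))) := by simp only [Matrix.mul_assoc]
        _ = Pr i * (ψ * (Pr i * (ψ * Pr i))) := by rw [hPrIdem i]
        _ = (Pr i * ψ * Pr i * ψ) * Pr i := by simp only [Matrix.mul_assoc]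
    have htr1 : ((Pr i * ψ * Pr i) * (Pr i * ψ * Pr i)).trace = (Pr i * ψ * Pr i * ψ).trace := by
      rw [hMM, Matrix.trace_mul_comm]
      have h3 : Pr i * (Pr i * ψ * Pr i * ψ) = Pr i * ψ * Pr i * ψ := by
        calc Pr i * (Pr i * ψ * Pr i * ψ)
            = (Pr i * Pr i) * (ψ * (Pr i * ψ)) := by simp only [Matrix.mul_assoc]
          _ = Pr i * (ψ * (Pr i * ψ)) := by rw [hPrIdem i]
          _ = Pr i * ψ * Pr i * ψ := by simp only [Matrix.mul_assoc]
      rw [h3]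
    have htr2 : (Pr i * ψ * Pr i).trace = ((α i : ℝ) : ℂ) := by
      rw [Matrix.trace_mul_comm]
      have h4 : Pr i * (Pr i * ψ) = Pr i * ψ := by rw [← Matrix.mul_assoc, hPrIdem i]
      rw [h4, haR i]
    rw [htr1, htr2] at h1
    simp only [Complex.ofReal_re] at h1
    simp only [hβ]
    exact h1
  have hγ0 : ∀ i, 0 ≤ γ i := by
    intro i; simp only [hγ]
    exact UAux.trace_mul_psd_nonneg (hφ'psd i) hψ
  have hγα : ∀ i, γ i ≤ α i := by
    intro i
    have h2 := UAux.trace_mul_psd_nonneg (hφ'le i) hψ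
    rw [Matrix.sub_mul, Matrix.trace_sub] at h2
    simp only [Complex.sub_re] at h2
    simp only [hα, hγ]
    linarith [h2]
  have hwc : (∑ s, (w s : ℂ)) = 1 := by
    have := congrArg (fun r : ℝ => (r : ℂ)) hwsum
    push_cast at this
    simpa using this
  have hEtr : ∀ (i : Fin m) (X : Matrix (Fin N) (Fin N) ℂ),
      (∑ s, (w s : ℂ) * ((φ s i * X).trace)) = ((((d i : ℂ))⁻¹ • Pr i) * X).trace := by
    intro i X
    have h := congrArg (fun M : Matrix (Fin N) (Fin N) ℂ => (M * X).trace) (hfirst i)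
    simpa only [Finset.sum_mul, Matrix.smul_mul, Matrix.trace_sum, Matrix.trace_smul,
      smul_eq_mul] using h
  have hEψ : ∀ i, ((((d i : ℂ))⁻¹ • Pr i) * ψ).trace = ((d i : ℂ))⁻¹ * ((α i : ℝ) : ℂ) := by
    intro i
    rw [Matrix.smul_mul, Matrix.trace_smul, haR i, smul_eq_mul]
  have hlin : ∀ (f : S → Matrix (Fin N × Fin N) (Fin N × Fin N) ℂ)
      (R : Matrix (Fin N × Fin N) (Fin N × Fin N) ℂ),
      (∑ s, (w s : ℂ) * ((f s * R).trace)) = ((∑ s, (w s : ℂ) • f s) * R).trace := by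
    intro f R
    rw [Finset.sum_mul, Matrix.trace_sum]
    exact Finset.sum_congr rfl fun s _ => by rw [Matrix.smul_mul, Matrix.trace_smul, smul_eq_mul]
  have hF : ∀ i j, (∑ s, (w s : ℂ) * ((φ s i * φ s j * ψ).trace))
      = ((((d i : ℂ))⁻¹ • Pr i) * (((d j : ℂ))⁻¹ • Pr j) * ψ).trace
        + (if i = j then (((d i : ℂ))⁻¹ - (((d i : ℂ))⁻¹) ^ 2) * ((α i : ℝ) : ℂ) else 0) := by
    intro i j
    by_cases hij : i = j
    · subst hij
      rw [if_pos rfl]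
      have h1 : (∑ s, (w s : ℂ) * ((φ s i * φ s i * ψ).trace))
          = ((((d i : ℂ))⁻¹ • Pr i) * ψ).trace := by
        have h0 : ∀ s : S, (φ s i * φ s i * ψ).trace = (φ s i * ψ).trace := fun s => by
          rw [hφIdem s i]
        rw [Finset.sum_congr rfl fun s _ => by rw [h0 s]]
        exact hEtr i ψ
      have h3 : ((((d i : ℂ))⁻¹ • Pr i) * (((d i : ℂ))⁻¹ • Pr i) * ψ).trace
          = (((d i : ℂ))⁻¹) ^ 2 * ((α i : ℝ) : ℂ) := by
        have hm2 : ((((d i : ℂ))⁻¹ • Pr i) * (((d i : ℂ))⁻¹ • Pr i) * ψ)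
            = (((d i : ℂ))⁻¹ * ((d i : ℂ))⁻¹) • (Pr i * ψ) := by
          simp only [Matrix.smul_mul, Matrix.mul_smul, smul_smul]
          rw [hPrIdem i]
        rw [hm2, Matrix.trace_smul, haR i, smul_eq_mul]
        ring
      rw [h1, h3, hEψ i]
      ring
    · rw [if_neg hij, add_zero]
      calc (∑ s, (w s : ℂ) * ((φ s i * φ s j * ψ).trace))
          = ∑ s, (w s : ℂ) * (((φ s i ⊗ₖ φ s j) * (swapMat N * (ψ ⊗ₖ 1))).trace) :=
            Finset.sum_congr rfl fun s _ => by rw [UAux.trace_mul_mul_eq]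
        _ = ((∑ s, (w s : ℂ) • (φ s i ⊗ₖ φ s j)) * (swapMat N * (ψ ⊗ₖ 1))).trace :=
            hlin _ _
        _ = (((((d i : ℂ))⁻¹ • Pr i) ⊗ₖ (((d j : ℂ))⁻¹ • Pr j)) * (swapMat N * (ψ ⊗ₖ 1))).trace := by
            rw [hpair i j hij]
        _ = ((((d i : ℂ))⁻¹ • Pr i) * (((d j : ℂ))⁻¹ • Pr j) * ψ).trace :=
            (UAux.trace_mul_mul_eq _ _ _).symm
  have hG : ∀ i, (∑ s, (w s : ℂ) * (((φ s i * ψ).trace)) ^ 2)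
      = ((d i : ℂ) * ((d i : ℂ) + 1))⁻¹ * ((((α i : ℝ) : ℂ)) ^ 2 + ((β i : ℝ) : ℂ)) := by
    intro i
    have hper : ∀ s : S, (((φ s i * ψ).trace)) ^ 2 = ((φ s i ⊗ₖ φ s i) * (ψ ⊗ₖ ψ)).trace := by
      intro s
      rw [← Matrix.mul_kronecker_mul, Matrix.trace_kronecker]
      ring
    rw [Finset.sum_congr rfl fun s _ => by rw [hper s]]
    rw [hlin _ _, hsecond i, Matrix.smul_mul, Matrix.trace_smul, smul_eq_mul]
    congr 1
    have hsplit : (Pr i ⊗ₖ Pr i) * (1 + swapMat N) * (Pr i ⊗ₖ Pr i) * (ψ ⊗ₖ ψ)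
        = ((Pr i * ψ) ⊗ₖ (Pr i * ψ)) + (Pr i ⊗ₖ Pr i) * (swapMat N * (ψ ⊗ₖ ψ)) := by
      rw [Matrix.mul_add, Matrix.mul_one, Matrix.add_mul, Matrix.add_mul]
      congr 1
      · rw [← Matrix.mul_kronecker_mul, hPrIdem i, ← Matrix.mul_kronecker_mul]
      · calc (Pr i ⊗ₖ Pr i) * swapMat N * (Pr i ⊗ₖ Pr i) * (ψ ⊗ₖ ψ)
            = (Pr i ⊗ₖ Pr i) * (swapMat N * (Pr i ⊗ₖ Pr i)) * (ψ ⊗ₖ ψ) := by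
              rw [Matrix.mul_assoc (Pr i ⊗ₖ Pr i) (swapMat N) (Pr i ⊗ₖ Pr i)]
          _ = (Pr i ⊗ₖ Pr i) * ((Pr i ⊗ₖ Pr i) * swapMat N) * (ψ ⊗ₖ ψ) := by
              rw [UAux.swap_mul_kron]
          _ = ((Pr i ⊗ₖ Pr i) * (Pr i ⊗ₖ Pr i)) * (swapMat N * (ψ ⊗ₖ ψ)) := by
              simp only [Matrix.mul_assoc]
          _ = (Pr i ⊗ₖ Pr i) * (swapMat N * (ψ ⊗ₖ ψ)) := by
              rw [← Matrix.mul_kronecker_mul, hPrIdem i]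
    rw [hsplit, Matrix.trace_add, Matrix.trace_kronecker, haR i]
    have hsecondterm : ((Pr i ⊗ₖ Pr i) * (swapMat N * (ψ ⊗ₖ ψ))).trace = ((β i : ℝ) : ℂ) := by
      rw [Matrix.trace_mul_comm, Matrix.mul_assoc, ← Matrix.mul_kronecker_mul,
        UAux.trace_swap_kron]
      have h5 : (ψ * Pr i) * (ψ * Pr i) = ψ * (Pr i * ψ * Pr i) := by
        simp only [Matrix.mul_assoc]
      rw [h5, Matrix.trace_mul_comm, hbR i]
    rw [hsecondterm]
    ring
  have hXX : ∀ i j, i ≠ j → (∑ s, (w s : ℂ) * (((φ s i * ψ).trace) * ((φ s j * ψ).trace)))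
      = (((d i : ℂ))⁻¹ * ((α i : ℝ) : ℂ)) * (((d j : ℂ))⁻¹ * ((α j : ℝ) : ℂ)) := by
    intro i j hij
    have hper : ∀ s : S, ((φ s i * ψ).trace) * ((φ s j * ψ).trace)
        = ((φ s i ⊗ₖ φ s j) * (ψ ⊗ₖ ψ)).trace := by
      intro s
      rw [← Matrix.mul_kronecker_mul, Matrix.trace_kronecker]
    rw [Finset.sum_congr rfl fun s _ => by rw [hper s]]
    rw [hlin _ _, hpair i j hij, ← Matrix.mul_kronecker_mul, Matrix.trace_kronecker,
      hEψ i, hEψ j]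
  have hsplit2 : ∀ (f g : Fin m → Fin m → ℂ),
      (∑ i, ∑ j, (f i j + g i j)) = (∑ i, ∑ j, f i j) + (∑ i, ∑ j, g i j) := by
    intro f g
    rw [← Finset.sum_add_distrib]
    exact Finset.sum_congr rfl fun i _ => by rw [Finset.sum_add_distrib]
  have hcyc : ∀ (i : Fin m) (X : Matrix (Fin N) (Fin N) ℂ),
      (Pr i * X * ψ).trace = (X * (ψ * Pr i)).trace := by
    intro i X
    rw [Matrix.trace_mul_cycle, Matrix.trace_mul_cycle, Matrix.mul_assoc]
  have per1 : ∀ i j, (∑ s, (w s : ℂ) * (((Pr i + φ s i) * (Pr j + φ s j) * ψ).trace))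
      = (((Pr i + ((d i : ℂ))⁻¹ • Pr i) * (Pr j + ((d j : ℂ))⁻¹ • Pr j) * ψ).trace)
        + (if i = j then (((d i : ℂ))⁻¹ - (((d i : ℂ))⁻¹) ^ 2) * ((α i : ℝ) : ℂ) else 0) := by
    intro i j
    rw [UAux.trace_expand_prod (Pr i) (((d i : ℂ))⁻¹ • Pr i) (Pr j) (((d j : ℂ))⁻¹ • Pr j) ψ]
    rw [Finset.sum_congr rfl fun s _ => by
      rw [UAux.trace_expand_prod (Pr i) (φ s i) (Pr j) (φ s j) ψ]]
    simp only [mul_add, Finset.sum_add_distrib]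
    have e1 : (∑ s, (w s : ℂ) * ((Pr i * Pr j * ψ).trace)) = (Pr i * Pr j * ψ).trace := by
      rw [← Finset.sum_mul, hwc, one_mul]
    have e2 : (∑ s, (w s : ℂ) * ((Pr i * φ s j * ψ).trace))
        = (Pr i * (((d j : ℂ))⁻¹ • Pr j) * ψ).trace := by
      calc (∑ s, (w s : ℂ) * ((Pr i * φ s j * ψ).trace))
          = ∑ s, (w s : ℂ) * ((φ s j * (ψ * Pr i)).trace) :=
            Finset.sum_congr rfl fun s _ => by rw [hcyc i (φ s j)]
        _ = ((((d j : ℂ))⁻¹ • Pr j) * (ψ * Pr i)).trace := hEtr j (ψ * Pr i)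
        _ = (Pr i * (((d j : ℂ))⁻¹ • Pr j) * ψ).trace := by rw [← hcyc i]
    have e3 : (∑ s, (w s : ℂ) * ((φ s i * Pr j * ψ).trace))
        = ((((d i : ℂ))⁻¹ • Pr i) * Pr j * ψ).trace := by
      calc (∑ s, (w s : ℂ) * ((φ s i * Pr j * ψ).trace))
          = ∑ s, (w s : ℂ) * ((φ s i * (Pr j * ψ)).trace) :=
            Finset.sum_congr rfl fun s _ => by rw [Matrix.mul_assoc]
        _ = ((((d i : ℂ))⁻¹ • Pr i) * (Pr j * ψ)).trace := hEtr i (Pr j * ψ)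
        _ = ((((d i : ℂ))⁻¹ • Pr i) * Pr j * ψ).trace := by rw [Matrix.mul_assoc]
    rw [e1, e2, e3, hF i j]
    ring
  have Id1 : (∑ s, (w s : ℂ) * (((∑ i, (Pr i + φ s i)) * (∑ i, (Pr i + φ s i)) * ψ).trace))
      = ((∑ i, (Pr i + ((d i : ℂ))⁻¹ • Pr i)) * (∑ i, (Pr i + ((d i : ℂ))⁻¹ • Pr i)) * ψ).trace
        + ∑ i, (((d i : ℂ))⁻¹ - (((d i : ℂ))⁻¹) ^ 2) * ((α i : ℝ) : ℂ) := by
    have expand : ∀ (A : Fin m → Matrix (Fin N) (Fin N) ℂ),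
        ((∑ i, A i) * (∑ j, A j) * ψ).trace = ∑ i, ∑ j, (A i * A j * ψ).trace := by
      intro A
      rw [Finset.sum_mul_sum]
      rw [Finset.sum_mul, Matrix.trace_sum]
      exact Finset.sum_congr rfl fun i _ => by rw [Finset.sum_mul, Matrix.trace_sum]
    calc (∑ s, (w s : ℂ) * (((∑ i, (Pr i + φ s i)) * (∑ i, (Pr i + φ s i)) * ψ).trace))
        = ∑ s, ∑ i, ∑ j, (w s : ℂ) * (((Pr i + φ s i) * (Pr j + φ s j) * ψ).trace) := by
          refine Finset.sum_congr rfl fun s _ => ?_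
          rw [expand]
          simp only [Finset.mul_sum]
      _ = ∑ i, ∑ j, ∑ s, (w s : ℂ) * (((Pr i + φ s i) * (Pr j + φ s j) * ψ).trace) := by
          rw [Finset.sum_comm]
          exact Finset.sum_congr rfl fun i _ => Finset.sum_comm
      _ = ∑ i, ∑ j, ((((Pr i + ((d i : ℂ))⁻¹ • Pr i) * (Pr j + ((d j : ℂ))⁻¹ • Pr j) * ψ).trace)
            + (if i = j then (((d i : ℂ))⁻¹ - (((d i : ℂ))⁻¹) ^ 2) * ((α i : ℝ) : ℂ) else 0)) :=
          Finset.sum_congr rfl fun i _ => Finset.sum_congr rfl fun j _ => per1 i j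
      _ = ((∑ i, (Pr i + ((d i : ℂ))⁻¹ • Pr i)) * (∑ i, (Pr i + ((d i : ℂ))⁻¹ • Pr i)) * ψ).trace
            + ∑ i, (((d i : ℂ))⁻¹ - (((d i : ℂ))⁻¹) ^ 2) * ((α i : ℝ) : ℂ) := by
          rw [hsplit2, expand]
          congr 1
          exact Finset.sum_congr rfl fun i _ => by simp
  have per2 : ∀ i j, (∑ s, (w s : ℂ) * (((Pr i + φ s i) * ψ).trace * ((Pr j + φ s j) * ψ).trace))
      = ((Pr i + ((d i : ℂ))⁻¹ • Pr i) * ψ).trace * ((Pr j + ((d j : ℂ))⁻¹ • Pr j) * ψ).trace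
        + (if i = j then ((d i : ℂ) * ((d i : ℂ) + 1))⁻¹ * ((((α i : ℝ) : ℂ)) ^ 2 + ((β i : ℝ) : ℂ))
            - (((d i : ℂ))⁻¹ * ((α i : ℝ) : ℂ)) ^ 2 else 0) := by
    intro i j
    have hsplit : ∀ s : S, ((Pr i + φ s i) * ψ).trace * ((Pr j + φ s j) * ψ).trace
        = (Pr i * ψ).trace * ((Pr j * ψ).trace) + (Pr i * ψ).trace * ((φ s j * ψ).trace)
          + ((φ s i * ψ).trace) * ((Pr j * ψ).trace) + ((φ s i * ψ).trace) * ((φ s j * ψ).trace) := by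
      intro s
      rw [Matrix.add_mul, Matrix.trace_add, Matrix.add_mul, Matrix.trace_add]
      ring
    have hEc : ∀ k, ((Pr k + ((d k : ℂ))⁻¹ • Pr k) * ψ).trace
        = (Pr k * ψ).trace + ((((d k : ℂ))⁻¹ • Pr k) * ψ).trace := by
      intro k
      rw [Matrix.add_mul, Matrix.trace_add]
    rw [Finset.sum_congr rfl fun s _ => by rw [hsplit s]]
    simp only [mul_add, Finset.sum_add_distrib]
    have f1 : (∑ s, (w s : ℂ) * ((Pr i * ψ).trace * ((Pr j * ψ).trace)))
        = (Pr i * ψ).trace * (Pr j * ψ).trace := by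
      rw [← Finset.sum_mul, hwc, one_mul]
    have f2 : (∑ s, (w s : ℂ) * ((Pr i * ψ).trace * ((φ s j * ψ).trace)))
        = (Pr i * ψ).trace * (((((d j : ℂ))⁻¹ • Pr j) * ψ).trace) := by
      calc (∑ s, (w s : ℂ) * ((Pr i * ψ).trace * ((φ s j * ψ).trace)))
          = (Pr i * ψ).trace * ∑ s, (w s : ℂ) * ((φ s j * ψ).trace) := by
            rw [Finset.mul_sum]
            exact Finset.sum_congr rfl fun s _ => by ring
        _ = _ := by rw [hEtr j ψ]
    have f3 : (∑ s, (w s : ℂ) * (((φ s i * ψ).trace) * ((Pr j * ψ).trace)))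
        = (((((d i : ℂ))⁻¹ • Pr i) * ψ).trace) * ((Pr j * ψ).trace) := by
      calc (∑ s, (w s : ℂ) * (((φ s i * ψ).trace) * ((Pr j * ψ).trace)))
          = (∑ s, (w s : ℂ) * ((φ s i * ψ).trace)) * ((Pr j * ψ).trace) := by
            rw [Finset.sum_mul]
            exact Finset.sum_congr rfl fun s _ => by ring
        _ = _ := by rw [hEtr i ψ]
    rw [f1, f2, f3, hEc i, hEc j]
    by_cases hij : i = j
    · subst hij
      rw [if_pos rfl]
      have f4 : (∑ s, (w s : ℂ) * (((φ s i * ψ).trace) * ((φ s i * ψ).trace)))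
          = ((d i : ℂ) * ((d i : ℂ) + 1))⁻¹ * ((((α i : ℝ) : ℂ)) ^ 2 + ((β i : ℝ) : ℂ)) := by
        rw [← hG i]
        exact Finset.sum_congr rfl fun s _ => by ring
      rw [f4, hEψ i]
      ring
    · rw [if_neg hij, add_zero]
      rw [hXX i j hij, hEψ i, hEψ j]
      ring
  have Id2 : (∑ s, (w s : ℂ) * ((((∑ i, (Pr i + φ s i)) * ψ).trace)) ^ 2)
      = ((((∑ i, (Pr i + ((d i : ℂ))⁻¹ • Pr i)) * ψ).trace)) ^ 2
        + ∑ i, (((d i : ℂ) * ((d i : ℂ) + 1))⁻¹ * ((((α i : ℝ) : ℂ)) ^ 2 + ((β i : ℝ) : ℂ))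
            - (((d i : ℂ))⁻¹ * ((α i : ℝ) : ℂ)) ^ 2) := by
    have tr_lin : ∀ (A : Fin m → Matrix (Fin N) (Fin N) ℂ),
        ((∑ i, A i) * ψ).trace = ∑ i, (A i * ψ).trace := by
      intro A
      rw [Finset.sum_mul, Matrix.trace_sum]
    calc (∑ s, (w s : ℂ) * ((((∑ i, (Pr i + φ s i)) * ψ).trace)) ^ 2)
        = ∑ s, ∑ i, ∑ j, (w s : ℂ) * (((Pr i + φ s i) * ψ).trace * ((Pr j + φ s j) * ψ).trace) := by
          refine Finset.sum_congr rfl fun s _ => ?_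
          rw [tr_lin, pow_two, Finset.sum_mul_sum]
          simp only [Finset.mul_sum]
      _ = ∑ i, ∑ j, ∑ s, (w s : ℂ) * (((Pr i + φ s i) * ψ).trace * ((Pr j + φ s j) * ψ).trace) := by
          rw [Finset.sum_comm]
          exact Finset.sum_congr rfl fun i _ => Finset.sum_comm
      _ = ∑ i, ∑ j, (((Pr i + ((d i : ℂ))⁻¹ • Pr i) * ψ).trace * ((Pr j + ((d j : ℂ))⁻¹ • Pr j) * ψ).trace
            + (if i = j then ((d i : ℂ) * ((d i : ℂ) + 1))⁻¹ * ((((α i : ℝ) : ℂ)) ^ 2 + ((β i : ℝ) : ℂ))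
                - (((d i : ℂ))⁻¹ * ((α i : ℝ) : ℂ)) ^ 2 else 0)) :=
          Finset.sum_congr rfl fun i _ => Finset.sum_congr rfl fun j _ => per2 i j
      _ = ((((∑ i, (Pr i + ((d i : ℂ))⁻¹ • Pr i)) * ψ).trace)) ^ 2
            + ∑ i, (((d i : ℂ) * ((d i : ℂ) + 1))⁻¹ * ((((α i : ℝ) : ℂ)) ^ 2 + ((β i : ℝ) : ℂ))
                - (((d i : ℂ))⁻¹ * ((α i : ℝ) : ℂ)) ^ 2) := by
          rw [hsplit2, tr_lin, pow_two, Finset.sum_mul_sum]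
          congr 1
          exact Finset.sum_congr rfl fun i _ => by simp
  have hHsherm : ∀ s : S, (∑ i, (Pr i + φ s i)).IsHermitian := by
    intro s
    rw [Matrix.IsHermitian, Matrix.conjTranspose_sum]
    exact Finset.sum_congr rfl fun i _ => by
      rw [Matrix.conjTranspose_add, (hPrHerm i).eq, (hφHerm s i).eq]
  have hHbherm : (∑ i, (Pr i + ((d i : ℂ))⁻¹ • Pr i)).IsHermitian := by
    rw [Matrix.IsHermitian, Matrix.conjTranspose_sum]
    refine Finset.sum_congr rfl fun i _ => ?_
    rw [Matrix.conjTranspose_add, (hPrHerm i).eq, Matrix.conjTranspose_smul, (hPrHerm i).eq]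
    congr 1
    simp [Complex.star_def, map_inv₀, Complex.conj_ofReal]
  have hreal1 : ∀ s : S, ((∑ i, (Pr i + φ s i)) * ψ).trace
      = (((((∑ i, (Pr i + φ s i)) * ψ).trace).re : ℝ) : ℂ) := fun s =>
    UAux.trace_herm_mul_real (hHsherm s) hψ.1
  have step0 : ∑ s, w s * matVar ψ (∑ i, (Pr i + φ s i))
      = (∑ s, (w s : ℂ) * (((∑ i, (Pr i + φ s i)) * (∑ i, (Pr i + φ s i)) * ψ).trace)).re
        - (∑ s, (w s : ℂ) * ((((∑ i, (Pr i + φ s i)) * ψ).trace)) ^ 2).re := by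
    rw [Complex.re_sum, Complex.re_sum, ← Finset.sum_sub_distrib]
    refine Finset.sum_congr rfl fun s _ => ?_
    simp only [matVar, mul_sub]
    congr 1
    · exact (Complex.re_ofReal_mul _ _).symm
    · have h6 : ((w s : ℂ) * ((((∑ i, (Pr i + φ s i)) * ψ).trace)) ^ 2)
          = (((w s * ((((∑ i, (Pr i + φ s i)) * ψ).trace).re) ^ 2 : ℝ)) : ℂ) := by
        rw [hreal1 s]
        push_cast
        simp only [Complex.ofReal_re]
      rw [h6, Complex.ofReal_re]
  have h2re : ((((∑ i, (Pr i + ((d i : ℂ))⁻¹ • Pr i)) * ψ).trace)) ^ 2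
      = (((((((∑ i, (Pr i + ((d i : ℂ))⁻¹ • Pr i)) * ψ).trace).re) ^ 2 : ℝ)) : ℂ) := by
    rw [UAux.trace_herm_mul_real hHbherm hψ.1]
    push_cast
    simp only [Complex.ofReal_re]
  have hC1 : (∑ i, ((((d i : ℂ))⁻¹ - (((d i : ℂ))⁻¹) ^ 2) * ((α i : ℝ) : ℂ)))
      = (((∑ i, (((d i)⁻¹ - ((d i)⁻¹) ^ 2) * α i) : ℝ)) : ℂ) := by
    rw [Complex.ofReal_sum]
    exact Finset.sum_congr rfl fun i _ => by push_cast; ring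
  have hC2 : (∑ i, (((d i : ℂ) * ((d i : ℂ) + 1))⁻¹ * ((((α i : ℝ) : ℂ)) ^ 2 + ((β i : ℝ) : ℂ))
        - (((d i : ℂ))⁻¹ * ((α i : ℝ) : ℂ)) ^ 2))
      = (((∑ i, ((d i * (d i + 1))⁻¹ * ((α i) ^ 2 + β i) - ((d i)⁻¹ * α i) ^ 2) : ℝ)) : ℂ) := by
    rw [Complex.ofReal_sum]
    exact Finset.sum_congr rfl fun i _ => by push_cast; ring
  have step1 : ∑ s, w s * matVar ψ (∑ i, (Pr i + φ s i))
      = matVar ψ (∑ i, (Pr i + ((d i : ℂ))⁻¹ • Pr i))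
        + ∑ i, ((((d i)⁻¹ - ((d i)⁻¹) ^ 2) * α i)
            - ((d i * (d i + 1))⁻¹ * ((α i) ^ 2 + β i) - ((d i)⁻¹ * α i) ^ 2)) := by
    rw [step0, Id1, Id2, hC1, hC2, h2re]
    simp only [Complex.add_re, Complex.ofReal_re, matVar, Finset.sum_sub_distrib]
    ring
  have hvar : 0 ≤ matVar ψ (∑ i, (Pr i + ((d i : ℂ))⁻¹ • Pr i)) := by
    simpa [matVar] using UAux.var_nonneg hHbherm hψ hψtr
  have hterm : ∀ i, ((d i - 1) / (d i * (d i + 1))) * α i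
      ≤ (((d i)⁻¹ - ((d i)⁻¹) ^ 2) * α i)
        - ((d i * (d i + 1))⁻¹ * ((α i) ^ 2 + β i) - ((d i)⁻¹ * α i) ^ 2) := by
    intro i
    have h1 := hd1 i
    have h2 := hdpos i
    have h3 := hα0 i
    have h4 := hα1 i
    have h5 := hβα i
    rw [← sub_nonneg]
    have heq : (((d i)⁻¹ - ((d i)⁻¹) ^ 2) * α i)
        - ((d i * (d i + 1))⁻¹ * ((α i) ^ 2 + β i) - ((d i)⁻¹ * α i) ^ 2)
        - ((d i - 1) / (d i * (d i + 1))) * α i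
        = (α i * (d i - 1) + (α i) ^ 2 - d i * β i) / ((d i) ^ 2 * (d i + 1)) := by
      field_simp
      ring
    rw [heq]
    apply div_nonneg
    · nlinarith [mul_nonneg (mul_nonneg h3 (sub_nonneg.2 h4)) (sub_nonneg.2 h1),
        mul_le_mul_of_nonneg_left h5 (le_of_lt h2)]
    · have h7 : (0:ℝ) < d i + 1 := by linarith
      positivity
  have hc_le : ∀ i, c ≤ (d i - 1) / (d i * (d i + 1)) := by
    intro i
    rw [hc]
    exact ciInf_le (Set.Finite.bddBelow (Set.finite_range _)) i
  have hc0 : 0 ≤ c := by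
    rw [hc]
    refine le_ciInf fun i => div_nonneg (by linarith [hd1 i]) ?_
    have := hdpos i
    positivity
  have hRHS : (((∑ i, (Pr i + φ' i)) * ψ).trace).re = ∑ i, (α i + γ i) := by
    rw [Finset.sum_mul, Matrix.trace_sum, Complex.re_sum]
    refine Finset.sum_congr rfl fun i _ => ?_
    rw [Matrix.add_mul, Matrix.trace_add, Complex.add_re]
  rw [ge_iff_le, hRHS, step1]
  calc (1 / 2) * c * (∑ i, (α i + γ i)) ≤ (1 / 2) * c * (∑ i, (α i + α i)) := by
        apply mul_le_mul_of_nonneg_left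
        · exact Finset.sum_le_sum fun i _ => by linarith [hγα i]
        · exact mul_nonneg (by norm_num) hc0
    _ = ∑ i, c * α i := by
        rw [Finset.mul_sum]
        exact Finset.sum_congr rfl fun i _ => by ring
    _ ≤ ∑ i, ((((d i)⁻¹ - ((d i)⁻¹) ^ 2) * α i)
          - ((d i * (d i + 1))⁻¹ * ((α i) ^ 2 + β i) - ((d i)⁻¹ * α i) ^ 2)) :=
        Finset.sum_le_sum fun i _ => le_trans
          (mul_le_mul_of_nonneg_right (hc_le i) (hα0 i)) (hterm i)
    _ ≤ matVar ψ (∑ i, (Pr i + ((d i : ℂ))⁻¹ • Pr i)) + ∑ i, ((((d i)⁻¹ - ((d i)⁻¹) ^ 2) * α i)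
          - ((d i * (d i + 1))⁻¹ * ((α i) ^ 2 + β i) - ((d i)⁻¹ * α i) ^ 2)) :=
        le_add_of_nonneg_left hvar
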